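/- For all positive integers r and ℓ there exists a positive integer δ = δ(r,ℓ) such that the following holds: if G is a finite simple graph with a bipartition (X,Y) such that no two distinct vertices of X have the same open neighborhood, and for every nonempty subset A ⊆ V(G) the number of distinct sets of the form N(v) ∩ A with v ∈ V(G) is at most r·|A|, then for every subset Y' ⊆ Y with |Y'| ≥ max{2, |Y|/ℓ} there exist distinct vertices u, v ∈ Y' with |N(u) Δ N(v)| ≤ δ, where Δ denotes symmetric difference. -/

import Mathlib

open Finset

section Helpers

variable {V : Type} [DecidableEq V]

lemma symmDiff_singleton_not_mem {z : Finset V} {b : V} (hb : b ∉ z) :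
    symmDiff z {b} = insert b z := by
  ext a
  simp only [Finset.mem_symmDiff, Finset.mem_singleton, Finset.mem_insert]
  constructor
  · rintro (⟨ha, hne⟩ | ⟨rfl, _⟩)
    · exact Or.inr ha
    · exact Or.inl rfl
  · rintro (rfl | ha)
    · exact Or.inr ⟨rfl, hb⟩
    · exact Or.inl ⟨ha, fun h => hb (h ▸ ha)⟩

lemma symmDiff_singleton_mem {z : Finset V} {b : V} (hb : b ∈ z) :
    symmDiff z {b} = z.erase b := by
  ext a
  simp only [Finset.mem_symmDiff, Finset.mem_singleton, Finset.mem_erase]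
  constructor
  · rintro (⟨ha, hne⟩ | ⟨rfl, h⟩)
    · exact ⟨hne, ha⟩
    · exact absurd hb h
  · rintro ⟨hne, ha⟩
    exact Or.inl ⟨ha, hne⟩

/-- 4-variable min/max inequality. -/
lemma min_min_le (a b c d : ℕ) :
    min a b + min c d ≤ min (max a c) (max b d) + min (min a c) (min b d) := by
  rcases le_total a c with h1 | h1 <;> rcases le_total b d with h2 | h2 <;>
    simp only [min_def, max_def] <;> split_ifs <;> omega

lemma sq_le_four_pow (r : ℕ) : r ^ 2 ≤ 4 ^ r := by
  induction r with
  | zero => norm_num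
  | succ n ih =>
    have h4 : (4:ℕ) ^ (n+1) = 4 * 4 ^ n := by ring
    have h2 : (n+1)^2 ≤ 2 * n^2 + 2 := by nlinarith
    calc (n+1)^2 ≤ 2 * n^2 + 2 := h2
      _ ≤ 4 * 4^n := by
          have h1 : 1 ≤ (4:ℕ)^n := Nat.one_le_pow _ _ (by norm_num)
          nlinarith
      _ = 4 ^ (n+1) := h4.symm

lemma pow_arith {r a : ℕ} (hr : 1 ≤ r) (h : 2 ^ a ≤ r * a) : a ≤ 2 * r + 6 := by
  by_contra hc
  push_neg at hc
  -- show r * a < 2 ^ a for all a ≥ 2r + 7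
  have key : ∀ a, 2 * r + 7 ≤ a → r * a < 2 ^ a := by
    intro a ha
    induction a with
    | zero => omega
    | succ n ih =>
      rcases Nat.lt_or_ge n (2 * r + 7) with hn | hn
      · -- base case : a = 2r+7
        have hn' : n = 2 * r + 6 := by omega
        subst hn'
        have h1 : r ^ 2 ≤ 4 ^ r := sq_le_four_pow r
        have h2 : (2:ℕ) ^ (2 * r + 6 + 1) = 128 * (4 ^ r) := by
          have h4r : (4:ℕ) ^ r = 2 ^ (2 * r) := by
            rw [show (4:ℕ) = 2 ^ 2 by norm_num, ← pow_mul]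
          rw [h4r, show 2 * r + 6 + 1 = 7 + 2 * r by ring, pow_add]
          norm_num
        have h3 : r * (2 * r + 6 + 1) = 2 * r^2 + 7 * r := by ring
        have h4 : r ≤ r ^ 2 := by nlinarith
        nlinarith
      · have hrn : r < 2 ^ n := by
          have : n < 2 ^ n := Nat.lt_two_pow_self (n := n)
          omega
        have := ih hn
        have h2 : (2:ℕ) ^ (n+1) = 2 ^ n + 2 ^ n := by ring
        nlinarith
  have := key a (by omega)
  have ha : a ≤ 2 ^ a := Nat.le_of_lt (Nat.lt_two_pow_self (n := a))
  nlinarith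

end Helpers

section WBound

variable {V : Type} [DecidableEq V]

lemma erase_insert_comm' {x b : V} (hxb : x ≠ b) (t : Finset V) :
    (insert x t).erase b = insert x (t.erase b) := by
  ext a
  simp only [Finset.mem_erase, Finset.mem_insert]
  constructor
  · rintro ⟨hab, (rfl | ha)⟩
    · exact Or.inl rfl
    · exact Or.inr ⟨hab, ha⟩
  · rintro (rfl | ⟨hab, ha⟩)
    · exact ⟨hxb, Or.inl rfl⟩
    · exact ⟨hab, Or.inr ha⟩

lemma not_mem_symmDiff_singleton {x b : V} {t : Finset V} (hx : x ∉ t) (hxb : x ≠ b) :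
    x ∉ symmDiff t {b} := by
  simp only [Finset.mem_symmDiff, Finset.mem_singleton]
  rintro (⟨ha, -⟩ | ⟨rfl, -⟩)
  · exact hx ha
  · exact hxb rfl

lemma symmDiff_insert_comm {x b : V} (hxb : x ≠ b) {t : Finset V} (hx : x ∉ t) :
    symmDiff (insert x t) {b} = insert x (symmDiff t {b}) := by
  by_cases hb : b ∈ t
  · rw [symmDiff_singleton_mem (Finset.mem_insert_of_mem hb), symmDiff_singleton_mem hb,
      erase_insert_comm' hxb]
  · have hb' : b ∉ insert x t := by
      simp only [Finset.mem_insert]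
      rintro (rfl | h)
      · exact hxb rfl
      · exact hb h
    rw [symmDiff_singleton_not_mem hb', symmDiff_singleton_not_mem hb]
    ext a
    simp only [Finset.mem_insert]
    tauto

/-- Weighted Haussler edge bound for the one-inclusion graph. -/
lemma W_bound : ∀ (k : ℕ) (S : Finset V), S.card ≤ k →
    ∀ (d : ℕ) (F : Finset (Finset V)) (w : Finset V → ℕ),
    (∀ z ∈ F, z ⊆ S) → (∀ z, z ∉ F → w z = 0) →
    (∀ A : Finset V, A ⊆ S → (∀ t ∈ A.powerset, ∃ z ∈ F, z ∩ A = t) → A.card ≤ d) →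
    ∑ z ∈ F, ∑ b ∈ S, min (w z) (w (symmDiff z {b})) ≤ 2 * d * ∑ z ∈ F, w z := by
  intro k
  induction k with
  | zero =>
    intro S hS d F w hFS h0 hVC
    have : S = ∅ := Finset.card_eq_zero.mp (Nat.le_zero.mp hS)
    subst this
    simp
  | succ k ih =>
    intro S hS d F w hFS h0 hVC
    rcases Finset.eq_empty_or_nonempty S with rfl | ⟨x, hx⟩
    · simp
    set S₀ := S.erase x with hS₀def
    have hxS0 : x ∉ S₀ := Finset.notMem_erase x S
    have hins : insert x S₀ = S := Finset.insert_erase hx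
    have hS0card : S₀.card ≤ k := by
      have h1 : S₀.card = S.card - 1 := Finset.card_erase_of_mem hx
      have h2 : 1 ≤ S.card := Finset.card_pos.mpr ⟨x, hx⟩
      omega
    -- weight functions
    set uu : Finset V → ℕ := fun t => if x ∈ t then 0 else w t with huu
    set vv : Finset V → ℕ := fun t => if x ∈ t then 0 else w (insert x t) with hvv
    set wmax : Finset V → ℕ := fun t => max (uu t) (vv t) with hwmax
    set wmin : Finset V → ℕ := fun t => min (uu t) (vv t) with hwmin
    set F' : Finset (Finset V) := F.image (fun z => z.erase x) with hF'
    set F'' : Finset (Finset V) := F'.filter (fun t => t ∈ F ∧ insert x t ∈ F) with hF''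
    have hF'x : ∀ t ∈ F', x ∉ t := by
      intro t ht
      rcases Finset.mem_image.mp ht with ⟨z, hz, rfl⟩
      exact Finset.notMem_erase x z
    have hF'S0 : ∀ t ∈ F', t ⊆ S₀ := by
      intro t ht
      rcases Finset.mem_image.mp ht with ⟨z, hz, rfl⟩
      intro a ha
      rcases Finset.mem_erase.mp ha with ⟨hax, haz⟩
      exact Finset.mem_erase.mpr ⟨hax, hFS z hz haz⟩
    have memF'_of_memF : ∀ z ∈ F, x ∉ z → z ∈ F' := by
      intro z hz hxz
      have : z.erase x = z := Finset.erase_eq_of_notMem hxz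
      exact this ▸ Finset.mem_image_of_mem _ hz
    have memF'_of_ins : ∀ t : Finset V, insert x t ∈ F → x ∉ t → t ∈ F' := by
      intro t hins' hxt
      have : (insert x t).erase x = t := by
        rw [Finset.erase_insert hxt]
      exact this ▸ Finset.mem_image_of_mem _ hins'
    have supp' : ∀ t, t ∉ F' → wmax t = 0 := by
      intro t ht
      by_cases hxt : x ∈ t
      · simp [hwmax, huu, hvv, hxt]
      · have h1 : w t = 0 := by
          by_cases h : t ∈ F
          · exact absurd (memF'_of_memF t h hxt) ht
          · exact h0 t h
        have h2 : w (insert x t) = 0 := by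
          by_cases h : insert x t ∈ F
          · exact absurd (memF'_of_ins t h hxt) ht
          · exact h0 _ h
        simp [hwmax, huu, hvv, hxt, h1, h2]
    have supp'' : ∀ t, t ∉ F'' → wmin t = 0 := by
      intro t ht
      by_cases hxt : x ∈ t
      · simp [hwmin, huu, hvv, hxt]
      · by_cases h1 : t ∈ F
        · by_cases h2 : insert x t ∈ F
          · exact absurd (Finset.mem_filter.mpr ⟨memF'_of_memF t h1 hxt, h1, h2⟩) ht
          · simp [hwmin, huu, hvv, hxt, h0 _ h2]
        · simp [hwmin, huu, hvv, hxt, h0 _ h1]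
    have hF''sub : F'' ⊆ F' := Finset.filter_subset _ _
    -- VC transfers
    have VC' : ∀ A : Finset V, A ⊆ S₀ → (∀ t ∈ A.powerset, ∃ z ∈ F', z ∩ A = t) →
        A.card ≤ d := by
      intro A hA hsh
      apply hVC A (hA.trans (Finset.erase_subset x S))
      intro t ht
      rcases hsh t ht with ⟨z', hz', hz'A⟩
      rcases Finset.mem_image.mp hz' with ⟨z, hz, rfl⟩
      refine ⟨z, hz, ?_⟩
      rw [← hz'A]
      ext a
      simp only [Finset.mem_inter, Finset.mem_erase]
      constructor
      · rintro ⟨haz, haA⟩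
        have hax : a ≠ x := by
          rintro rfl
          exact hxS0 (hA haA)
        exact ⟨⟨hax, haz⟩, haA⟩
      · rintro ⟨⟨-, haz⟩, haA⟩
        exact ⟨haz, haA⟩
    have VC'' : ∀ A : Finset V, A ⊆ S₀ → (∀ t ∈ A.powerset, ∃ z ∈ F'', z ∩ A = t) →
        A.card ≤ d - 1 := by
      intro A hA hsh
      have hxA : x ∉ A := fun h => hxS0 (hA h)
      have key : (insert x A).card ≤ d := by
        apply hVC (insert x A)
        · intro a ha
          rcases Finset.mem_insert.mp ha with rfl | ha
          · exact hx
          · exact (Finset.erase_subset x S) (hA ha)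
        · intro t ht
          have htA : t.erase x ∈ A.powerset := by
            rw [Finset.mem_powerset] at ht ⊢
            intro a ha
            rcases Finset.mem_erase.mp ha with ⟨hax, hat⟩
            rcases Finset.mem_insert.mp (ht hat) with rfl | h
            · exact absurd rfl hax
            · exact h
          rcases hsh _ htA with ⟨z, hz, hzA⟩
          rcases Finset.mem_filter.mp hz with ⟨hzF', hzF, hinsF⟩
          have hxz : x ∉ z := hF'x z hzF'
          have hzxA : z ∩ insert x A = z ∩ A := by
            ext a
            simp only [Finset.mem_inter, Finset.mem_insert]
            constructor
            · rintro ⟨haz, (rfl | haA)⟩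
              · exact absurd haz hxz
              · exact ⟨haz, haA⟩
            · rintro ⟨haz, haA⟩
              exact ⟨haz, Or.inr haA⟩
          by_cases hxt : x ∈ t
          · refine ⟨insert x z, hinsF, ?_⟩
            have h1 : (insert x z) ∩ (insert x A) = insert x (z ∩ insert x A) :=
              Finset.insert_inter_of_mem (Finset.mem_insert_self x A)
            rw [h1, hzxA, hzA, Finset.insert_erase hxt]
          · refine ⟨z, hzF, ?_⟩
            rw [hzxA, hzA, Finset.erase_eq_of_notMem hxt]
      have hcard : (insert x A).card = A.card + 1 := Finset.card_insert_of_notMem hxA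
      omega
    -- F'' nonempty forces d ≥ 1
    have hd1 : F''.Nonempty → 1 ≤ d := by
      rintro ⟨t, ht⟩
      have h := VC'' ∅ (Finset.empty_subset _) ?_
      · -- this gives 0 ≤ d - 1, useless; instead use VC on {x} directly
        rcases Finset.mem_filter.mp ht with ⟨htF', htF, hinsF⟩
        have hxt : x ∉ t := hF'x t htF'
        have : ({x} : Finset V).card ≤ d := by
          apply hVC {x} (Finset.singleton_subset_iff.mpr hx)
          intro s hs
          rw [Finset.mem_powerset] at hs
          rcases Finset.subset_singleton_iff.mp hs with rfl | rfl
          · refine ⟨t, htF, ?_⟩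
            ext a
            simp only [Finset.mem_inter, Finset.mem_singleton, Finset.notMem_empty,
              iff_false, not_and]
            rintro hat rfl
            exact hxt hat
          · refine ⟨insert x t, hinsF, ?_⟩
            ext a
            simp only [Finset.mem_inter, Finset.mem_insert, Finset.mem_singleton]
            constructor
            · rintro ⟨-, rfl⟩
              rfl
            · rintro rfl
              exact ⟨Or.inl rfl, rfl⟩
        simpa using this
      · intro s hs
        rw [Finset.mem_powerset] at hs
        rw [Finset.subset_empty.mp hs]
        exact ⟨t, ht, Finset.inter_empty t⟩
    -- basic computation lemmas for the weights
    have huu_val : ∀ t : Finset V, x ∉ t → uu t = w t := by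
      intro t ht; simp [huu, ht]
    have hvv_val : ∀ t : Finset V, x ∉ t → vv t = w (insert x t) := by
      intro t ht; simp [hvv, ht]
    have hwmin_val : ∀ t : Finset V, wmin t = min (uu t) (vv t) := fun t => rfl
    have hwmax_val : ∀ t : Finset V, wmax t = max (uu t) (vv t) := fun t => rfl
    have hbne : ∀ b ∈ S₀, x ≠ b := by
      intro b hb
      rintro rfl
      exact hxS0 hb
    -- injectivity of erase on sets containing x
    have hinj : ∀ z₁ ∈ F.filter (fun z => x ∈ z), ∀ z₂ ∈ F.filter (fun z => x ∈ z),
        z₁.erase x = z₂.erase x → z₁ = z₂ := by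
      intro z₁ h₁ z₂ h₂ he
      have hx₁ : x ∈ z₁ := (Finset.mem_filter.mp h₁).2
      have hx₂ : x ∈ z₂ := (Finset.mem_filter.mp h₂).2
      rw [← Finset.insert_erase hx₁, ← Finset.insert_erase hx₂, he]
    have himgsub : (F.filter (fun z => x ∈ z)).image (fun z => z.erase x) ⊆ F' := by
      apply Finset.image_subset_image
      exact Finset.filter_subset _ _
    have hfilsub : F.filter (fun z => ¬ x ∈ z) ⊆ F' := by
      intro z hz
      rcases Finset.mem_filter.mp hz with ⟨hzF, hxz⟩
      exact memF'_of_memF z hzF hxz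
    -- decompose the inner sum over S = insert x S₀
    have hsplit : ∑ z ∈ F, ∑ b ∈ S, min (w z) (w (symmDiff z {b}))
        = (∑ z ∈ F, min (w z) (w (symmDiff z {x})))
          + ∑ z ∈ F, ∑ b ∈ S₀, min (w z) (w (symmDiff z {b})) := by
      rw [← Finset.sum_add_distrib]
      apply Finset.sum_congr rfl
      intro z _
      rw [← hins, Finset.sum_insert hxS0]
    rw [hsplit]
    -- Part 1 : the x-part
    have hXpart : (∑ z ∈ F, min (w z) (w (symmDiff z {x}))) ≤ 2 * ∑ t ∈ F', wmin t := by
      rw [← Finset.sum_filter_add_sum_filter_not F (fun z => x ∈ z)]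
      have e1 : ∑ z ∈ F.filter (fun z => x ∈ z), min (w z) (w (symmDiff z {x}))
          = ∑ z ∈ F.filter (fun z => x ∈ z), wmin (z.erase x) := by
        apply Finset.sum_congr rfl
        intro z hz
        have hxz : x ∈ z := (Finset.mem_filter.mp hz).2
        rw [symmDiff_singleton_mem hxz, hwmin_val,
          huu_val _ (Finset.notMem_erase x z), hvv_val _ (Finset.notMem_erase x z),
          Finset.insert_erase hxz, min_comm]
      have e2 : ∑ z ∈ F.filter (fun z => ¬ x ∈ z), min (w z) (w (symmDiff z {x}))
          = ∑ z ∈ F.filter (fun z => ¬ x ∈ z), wmin z := by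
        apply Finset.sum_congr rfl
        intro z hz
        have hxz : x ∉ z := (Finset.mem_filter.mp hz).2
        rw [symmDiff_singleton_not_mem hxz, hwmin_val, huu_val _ hxz, hvv_val _ hxz]
      rw [e1, e2]
      have b1 : ∑ z ∈ F.filter (fun z => x ∈ z), wmin (z.erase x) ≤ ∑ t ∈ F', wmin t := by
        have himg : ∑ t ∈ (F.filter (fun z => x ∈ z)).image (fun z => z.erase x), wmin t
            = ∑ z ∈ F.filter (fun z => x ∈ z), wmin (z.erase x) := Finset.sum_image hinj
        rw [← himg]
        exact Finset.sum_le_sum_of_subset himgsub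
      have b2 : ∑ z ∈ F.filter (fun z => ¬ x ∈ z), wmin z ≤ ∑ t ∈ F', wmin t :=
        Finset.sum_le_sum_of_subset hfilsub
      omega
    -- Part 2 : the S₀-part
    have hS0part : (∑ z ∈ F, ∑ b ∈ S₀, min (w z) (w (symmDiff z {b})))
        ≤ ∑ t ∈ F', ∑ b ∈ S₀,
            (min (uu t) (uu (symmDiff t {b})) + min (vv t) (vv (symmDiff t {b}))) := by
      rw [← Finset.sum_filter_add_sum_filter_not F (fun z => x ∈ z)]
      have e1 : ∑ z ∈ F.filter (fun z => x ∈ z), ∑ b ∈ S₀, min (w z) (w (symmDiff z {b}))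
          = ∑ z ∈ F.filter (fun z => x ∈ z), ∑ b ∈ S₀,
              min (vv (z.erase x)) (vv (symmDiff (z.erase x) {b})) := by
        apply Finset.sum_congr rfl
        intro z hz
        apply Finset.sum_congr rfl
        intro b hb
        have hxz : x ∈ z := (Finset.mem_filter.mp hz).2
        have hxb : x ≠ b := hbne b hb
        have hxe : x ∉ z.erase x := Finset.notMem_erase x z
        have hzins : insert x (z.erase x) = z := Finset.insert_erase hxz
        have hsd : symmDiff z {b} = insert x (symmDiff (z.erase x) {b}) := by
          conv_lhs => rw [← hzins]
          exact symmDiff_insert_comm hxb hxe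
        rw [hsd, hvv_val _ hxe, hvv_val _ (not_mem_symmDiff_singleton hxe hxb), hzins]
      have e2 : ∑ z ∈ F.filter (fun z => ¬ x ∈ z), ∑ b ∈ S₀, min (w z) (w (symmDiff z {b}))
          = ∑ z ∈ F.filter (fun z => ¬ x ∈ z), ∑ b ∈ S₀,
              min (uu z) (uu (symmDiff z {b})) := by
        apply Finset.sum_congr rfl
        intro z hz
        apply Finset.sum_congr rfl
        intro b hb
        have hxz : x ∉ z := (Finset.mem_filter.mp hz).2
        have hxb : x ≠ b := hbne b hb
        rw [huu_val _ hxz, huu_val _ (not_mem_symmDiff_singleton hxz hxb)]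
      rw [e1, e2]
      have b1 : ∑ z ∈ F.filter (fun z => x ∈ z), ∑ b ∈ S₀,
            min (vv (z.erase x)) (vv (symmDiff (z.erase x) {b}))
          ≤ ∑ t ∈ F', ∑ b ∈ S₀, min (vv t) (vv (symmDiff t {b})) := by
        have himg : ∑ t ∈ (F.filter (fun z => x ∈ z)).image (fun z => z.erase x),
              (∑ b ∈ S₀, min (vv t) (vv (symmDiff t {b})))
            = ∑ z ∈ F.filter (fun z => x ∈ z),
              (∑ b ∈ S₀, min (vv (z.erase x)) (vv (symmDiff (z.erase x) {b}))) :=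
          Finset.sum_image hinj
        rw [← himg]
        exact Finset.sum_le_sum_of_subset himgsub
      have b2 : ∑ z ∈ F.filter (fun z => ¬ x ∈ z), ∑ b ∈ S₀,
            min (uu z) (uu (symmDiff z {b}))
          ≤ ∑ t ∈ F', ∑ b ∈ S₀, min (uu t) (uu (symmDiff t {b})) :=
        Finset.sum_le_sum_of_subset hfilsub
      calc _ ≤ (∑ t ∈ F', ∑ b ∈ S₀, min (vv t) (vv (symmDiff t {b})))
            + ∑ t ∈ F', ∑ b ∈ S₀, min (uu t) (uu (symmDiff t {b})) := by omega
        _ = _ := by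
            rw [← Finset.sum_add_distrib]
            apply Finset.sum_congr rfl
            intro t _
            rw [← Finset.sum_add_distrib]
            apply Finset.sum_congr rfl
            intro b _
            omega
    -- pointwise 4-variable inequality
    have hkey : (∑ t ∈ F', ∑ b ∈ S₀,
          (min (uu t) (uu (symmDiff t {b})) + min (vv t) (vv (symmDiff t {b}))))
        ≤ (∑ t ∈ F', ∑ b ∈ S₀, min (wmax t) (wmax (symmDiff t {b})))
          + ∑ t ∈ F', ∑ b ∈ S₀, min (wmin t) (wmin (symmDiff t {b})) := by
      rw [← Finset.sum_add_distrib]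
      apply Finset.sum_le_sum
      intro t _
      rw [← Finset.sum_add_distrib]
      apply Finset.sum_le_sum
      intro b _
      rw [hwmin_val, hwmin_val, hwmax_val, hwmax_val]
      exact min_min_le _ _ _ _
    -- apply induction hypotheses
    have IH1 : (∑ t ∈ F', ∑ b ∈ S₀, min (wmax t) (wmax (symmDiff t {b})))
        ≤ 2 * d * ∑ t ∈ F', wmax t :=
      ih S₀ hS0card d F' wmax hF'S0 supp' VC'
    have hF''S0 : ∀ t ∈ F'', t ⊆ S₀ := fun t ht => hF'S0 t (hF''sub ht)
    have IH2 : (∑ t ∈ F'', ∑ b ∈ S₀, min (wmin t) (wmin (symmDiff t {b})))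
        ≤ 2 * (d - 1) * ∑ t ∈ F'', wmin t :=
      ih S₀ hS0card (d - 1) F'' wmin hF''S0 supp'' VC''
    -- sums over F' of wmin-terms restrict to F''
    have hres1 : ∑ t ∈ F', ∑ b ∈ S₀, min (wmin t) (wmin (symmDiff t {b}))
        = ∑ t ∈ F'', ∑ b ∈ S₀, min (wmin t) (wmin (symmDiff t {b})) := by
      symm
      apply Finset.sum_subset hF''sub
      intro t _ ht
      have : wmin t = 0 := supp'' t ht
      simp [this]
    have hres2 : ∑ t ∈ F', wmin t = ∑ t ∈ F'', wmin t := by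
      symm
      apply Finset.sum_subset hF''sub
      intro t _ ht
      exact supp'' t ht
    -- the d ≥ 1 case distinction for the wmin part
    have hminpart : 2 * (∑ t ∈ F', wmin t) + 2 * (d - 1) * (∑ t ∈ F'', wmin t)
        ≤ 2 * d * (∑ t ∈ F', wmin t) := by
      rcases Finset.eq_empty_or_nonempty F'' with he | hne
      · have hz : ∑ t ∈ F', wmin t = 0 := by rw [hres2, he]; simp
        rw [hz, he]
        simp
      · have hd : 1 ≤ d := hd1 hne
        rw [← hres2]
        calc 2 * (∑ t ∈ F', wmin t) + 2 * (d-1) * (∑ t ∈ F', wmin t)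
            = (2 + 2 * (d-1)) * (∑ t ∈ F', wmin t) := by ring
          _ ≤ (2 * d) * (∑ t ∈ F', wmin t) := Nat.mul_le_mul_right _ (by omega)
    -- weight identity
    have hweights : (∑ t ∈ F', wmax t) + ∑ t ∈ F', wmin t = ∑ z ∈ F, w z := by
      have e0 : (∑ t ∈ F', wmax t) + ∑ t ∈ F', wmin t = ∑ t ∈ F', (uu t + vv t) := by
        rw [← Finset.sum_add_distrib]
        apply Finset.sum_congr rfl
        intro t _
        rw [hwmax_val, hwmin_val]
        omega
      have eu : ∑ t ∈ F', uu t = ∑ z ∈ F.filter (fun z => ¬ x ∈ z), w z := by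
        rw [show (∑ t ∈ F', uu t) = ∑ z ∈ F.filter (fun z => ¬ x ∈ z), uu z by
          symm
          apply Finset.sum_subset hfilsub
          intro t htF' ht
          have hxt : x ∉ t := hF'x t htF'
          have : t ∉ F := by
            intro hc
            exact ht (Finset.mem_filter.mpr ⟨hc, hxt⟩)
          rw [huu_val _ hxt, h0 t this]]
        apply Finset.sum_congr rfl
        intro z hz
        exact huu_val z (Finset.mem_filter.mp hz).2
      have ev : ∑ t ∈ F', vv t = ∑ z ∈ F.filter (fun z => x ∈ z), w z := by
        have e1 : ∑ z ∈ F.filter (fun z => x ∈ z), w z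
            = ∑ z ∈ F.filter (fun z => x ∈ z), vv (z.erase x) := by
          apply Finset.sum_congr rfl
          intro z hz
          have hxz : x ∈ z := (Finset.mem_filter.mp hz).2
          rw [hvv_val _ (Finset.notMem_erase x z), Finset.insert_erase hxz]
        have himg : ∑ t ∈ (F.filter (fun z => x ∈ z)).image (fun z => z.erase x), vv t
            = ∑ z ∈ F.filter (fun z => x ∈ z), vv (z.erase x) := Finset.sum_image hinj
        rw [e1, ← himg]
        symm
        apply Finset.sum_subset himgsub
        intro t htF' ht
        have hxt : x ∉ t := hF'x t htF'
        have : insert x t ∉ F := by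
          intro hc
          apply ht
          apply Finset.mem_image.mpr
          refine ⟨insert x t, Finset.mem_filter.mpr ⟨hc, Finset.mem_insert_self x t⟩, ?_⟩
          rw [Finset.erase_insert hxt]
        rw [hvv_val _ hxt, h0 _ this]
      rw [e0, Finset.sum_add_distrib, eu, ev, add_comm]
      exact Finset.sum_filter_add_sum_filter_not F (fun z => x ∈ z) w
    -- final assembly
    calc (∑ z ∈ F, min (w z) (w (symmDiff z {x})))
          + ∑ z ∈ F, ∑ b ∈ S₀, min (w z) (w (symmDiff z {b}))
        ≤ (2 * ∑ t ∈ F', wmin t)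
          + ((∑ t ∈ F', ∑ b ∈ S₀, min (wmax t) (wmax (symmDiff t {b})))
            + ∑ t ∈ F', ∑ b ∈ S₀, min (wmin t) (wmin (symmDiff t {b}))) := by
          have := hS0part.trans hkey
          omega
      _ ≤ (2 * ∑ t ∈ F', wmin t)
          + ((2 * d * ∑ t ∈ F', wmax t) + 2 * (d-1) * ∑ t ∈ F'', wmin t) := by
          rw [hres1]
          omega
      _ ≤ 2 * d * ((∑ t ∈ F', wmax t) + ∑ t ∈ F', wmin t) := by
          have expand : 2 * d * ((∑ t ∈ F', wmax t) + ∑ t ∈ F', wmin t)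
              = 2 * d * (∑ t ∈ F', wmax t) + 2 * d * (∑ t ∈ F', wmin t) := by ring
          rw [expand]
          omega
      _ = 2 * d * ∑ z ∈ F, w z := by rw [hweights]

end WBound

section Packing

variable {V : Type} [DecidableEq V]

/-- fiber weight -/
def fw (P : Finset (Finset V)) (B t : Finset V) : ℕ :=
  (P.filter (fun D => D ∩ B = t)).card

lemma fw_pos_iff (P : Finset (Finset V)) (B t : Finset V) :
    0 < fw P B t ↔ t ∈ P.image (fun D => D ∩ B) := by
  simp [fw, Finset.card_pos, Finset.filter_nonempty_iff, Finset.mem_image]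

lemma sum_fw (P : Finset (Finset V)) (B : Finset V) :
    ∑ t ∈ P.image (fun D => D ∩ B), fw P B t = P.card := by
  exact (Finset.card_eq_sum_card_fiberwise (fun D hD => Finset.mem_image_of_mem _ hD)).symm

/-- the per-class inequality -/
lemma class_bound (P : Finset (Finset V)) (X B : Finset V) (δ' : ℕ)
    (hPX : ∀ D ∈ P, D ⊆ X)
    (hsep : ∀ D ∈ P, ∀ D' ∈ P, D ≠ D' → δ' ≤ (symmDiff D D').card)
    (hB : B ⊆ X) (z : Finset V) (hz : z ∈ P.image (fun D => D ∩ B)) :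
    δ' * (fw P B z - 1) ≤
      2 * ∑ b ∈ X \ B, min (fw P (insert b B) z) (fw P (insert b B) (insert b z)) := by
  classical
  set C := P.filter (fun D => D ∩ B = z) with hC
  obtain ⟨D₀, hD₀P, hD₀z⟩ := Finset.mem_image.mp hz
  have hzB : z ⊆ B := hD₀z ▸ Finset.inter_subset_right
  have hCne : C.Nonempty := ⟨D₀, Finset.mem_filter.mpr ⟨hD₀P, hD₀z⟩⟩
  have hw : fw P B z = C.card := rfl
  have hwpos : 0 < C.card := Finset.card_pos.mpr hCne
  -- the two fibers at b
  have hfib0 : ∀ b ∈ X \ B, C.filter (fun D => ¬ b ∈ D)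
      = P.filter (fun D => D ∩ insert b B = z) := by
    intro b hb
    have hbB : b ∉ B := (Finset.mem_sdiff.mp hb).2
    have hbz : b ∉ z := fun h => hbB (hzB h)
    ext D
    simp only [hC, Finset.mem_filter, and_assoc]
    constructor
    · rintro ⟨hDP, hDB, hbD⟩
      refine ⟨hDP, ?_⟩
      ext a
      simp only [Finset.mem_inter, Finset.mem_insert]
      constructor
      · rintro ⟨haD, (rfl | haB)⟩
        · exact absurd haD hbD
        · exact hDB ▸ Finset.mem_inter.mpr ⟨haD, haB⟩
      · intro haz
        have := hDB ▸ haz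
        rcases Finset.mem_inter.mp this with ⟨haD, haB⟩
        exact ⟨haD, Or.inr haB⟩
    · rintro ⟨hDP, hDiB⟩
      have hbD : b ∉ D := by
        intro hbD
        have : b ∈ D ∩ insert b B := Finset.mem_inter.mpr ⟨hbD, Finset.mem_insert_self b B⟩
        rw [hDiB] at this
        exact hbz this
      refine ⟨hDP, ?_, hbD⟩
      ext a
      simp only [Finset.mem_inter]
      constructor
      · rintro ⟨haD, haB⟩
        rw [← hDiB]
        exact Finset.mem_inter.mpr ⟨haD, Finset.mem_insert_of_mem haB⟩
      · intro haz
        have h1 : a ∈ D ∩ insert b B := hDiB ▸ haz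
        rcases Finset.mem_inter.mp h1 with ⟨haD, haiB⟩
        rcases Finset.mem_insert.mp haiB with rfl | haB
        · exact absurd haz hbz
        · exact ⟨haD, haB⟩
  have hfib1 : ∀ b ∈ X \ B, C.filter (fun D => b ∈ D)
      = P.filter (fun D => D ∩ insert b B = insert b z) := by
    intro b hb
    have hbB : b ∉ B := (Finset.mem_sdiff.mp hb).2
    have hbz : b ∉ z := fun h => hbB (hzB h)
    ext D
    simp only [hC, Finset.mem_filter, and_assoc]
    constructor
    · rintro ⟨hDP, hDB, hbD⟩
      refine ⟨hDP, ?_⟩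
      ext a
      simp only [Finset.mem_inter, Finset.mem_insert]
      constructor
      · rintro ⟨haD, (rfl | haB)⟩
        · exact Or.inl rfl
        · exact Or.inr (hDB ▸ Finset.mem_inter.mpr ⟨haD, haB⟩)
      · rintro (rfl | haz)
        · exact ⟨hbD, Or.inl rfl⟩
        · have := hDB ▸ haz
          rcases Finset.mem_inter.mp this with ⟨haD, haB⟩
          exact ⟨haD, Or.inr haB⟩
    · rintro ⟨hDP, hDiB⟩
      have hbD : b ∈ D := by
        have : b ∈ D ∩ insert b B := by
          rw [hDiB]
          exact Finset.mem_insert_self b z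
        exact (Finset.mem_inter.mp this).1
      refine ⟨hDP, ?_, hbD⟩
      ext a
      simp only [Finset.mem_inter]
      constructor
      · rintro ⟨haD, haB⟩
        have : a ∈ D ∩ insert b B := Finset.mem_inter.mpr ⟨haD, Finset.mem_insert_of_mem haB⟩
        rw [hDiB] at this
        rcases Finset.mem_insert.mp this with rfl | haz
        · exact absurd haB hbB
        · exact haz
      · intro haz
        have h1 : a ∈ D ∩ insert b B := by
          rw [hDiB]
          exact Finset.mem_insert_of_mem haz
        rcases Finset.mem_inter.mp h1 with ⟨haD, haiB⟩
        rcases Finset.mem_insert.mp haiB with rfl | haB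
        · exact absurd haz hbz
        · exact ⟨haD, haB⟩
  -- step 1 : separation lower bound
  have step1 : δ' * (C.card * (C.card - 1)) ≤ ∑ D ∈ C, ∑ D' ∈ C, (symmDiff D D').card := by
    have h1 : ∀ D ∈ C, δ' * (C.card - 1) ≤ ∑ D' ∈ C, (symmDiff D D').card := by
      intro D hD
      have e : δ' * (C.card - 1) = ∑ _D' ∈ C.erase D, δ' := by
        rw [Finset.sum_const, Finset.card_erase_of_mem hD, smul_eq_mul, mul_comm]
      rw [e]
      refine le_trans (Finset.sum_le_sum ?_) (Finset.sum_le_sum_of_subset (Finset.erase_subset D C))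
      intro D' hD'
      rcases Finset.mem_erase.mp hD' with ⟨hne, hD'C⟩
      exact hsep D (Finset.filter_subset _ _ hD) D' (Finset.filter_subset _ _ hD'C)
        (Ne.symm hne)
    calc δ' * (C.card * (C.card - 1)) = ∑ _D ∈ C, δ' * (C.card - 1) := by
          rw [Finset.sum_const, smul_eq_mul]; ring
      _ ≤ ∑ D ∈ C, ∑ D' ∈ C, (symmDiff D D').card := Finset.sum_le_sum h1
  -- step 2 : expand each symmetric difference over X \ B
  have inner_eq : ∀ D ∈ C, ∀ D' ∈ C,
      (symmDiff D D').card = ∑ b ∈ X \ B, (if b ∈ symmDiff D D' then 1 else 0) := by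
    intro D hD D' hD'
    rcases Finset.mem_filter.mp hD with ⟨hDP, hDz⟩
    rcases Finset.mem_filter.mp hD' with ⟨hD'P, hD'z⟩
    have hsub : symmDiff D D' ⊆ X \ B := by
      intro a ha
      have key : ∀ E E' : Finset V, E ∈ P → E ∩ B = z → E' ∩ B = z → a ∈ E → a ∉ E' →
          a ∈ X \ B := by
        intro E E' hEP hEz hE'z haE haE'
        refine Finset.mem_sdiff.mpr ⟨hPX E hEP haE, fun haB => ?_⟩
        have : a ∈ E ∩ B := Finset.mem_inter.mpr ⟨haE, haB⟩
        rw [hEz, ← hE'z] at this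
        exact haE' (Finset.mem_inter.mp this).1
      rcases Finset.mem_symmDiff.mp ha with ⟨haD, haD'⟩ | ⟨haD', haD⟩
      · exact key D D' hDP hDz hD'z haD haD'
      · exact key D' D hD'P hD'z hDz haD' haD
    rw [Finset.sum_ite_mem, Finset.sum_const, smul_eq_mul, mul_one,
      Finset.inter_eq_right.mpr hsub]
  have count_ite : ∀ (b : V), ∀ (p : Finset V → Prop) (_ : DecidablePred p),
      (∑ D' ∈ C, (if p D' then (1:ℕ) else 0)) = (C.filter p).card := by
    intro b p hp
    rw [Finset.sum_ite, Finset.sum_const, Finset.sum_const]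
    simp
  have step2 : (∑ D ∈ C, ∑ D' ∈ C, (symmDiff D D').card)
      = ∑ b ∈ X \ B, 2 * ((C.filter (fun D => ¬ b ∈ D)).card
          * (C.filter (fun D => b ∈ D)).card) := by
    have e0 : (∑ D ∈ C, ∑ D' ∈ C, (symmDiff D D').card)
        = ∑ D ∈ C, ∑ D' ∈ C, ∑ b ∈ X \ B, (if b ∈ symmDiff D D' then 1 else 0) :=
      Finset.sum_congr rfl (fun D hD => Finset.sum_congr rfl (fun D' hD' => inner_eq D hD D' hD'))
    have e2 : ∀ D, D ∈ C → (∑ D' ∈ C, ∑ b ∈ X \ B, (if b ∈ symmDiff D D' then (1:ℕ) else 0))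
        = ∑ b ∈ X \ B, ∑ D' ∈ C, (if b ∈ symmDiff D D' then 1 else 0) :=
      fun D _ => Finset.sum_comm
    rw [e0, Finset.sum_congr rfl e2, Finset.sum_comm]
    apply Finset.sum_congr rfl
    intro b _
    rw [← Finset.sum_filter_add_sum_filter_not C (fun D => b ∈ D)]
    have part1 : (∑ D ∈ C.filter (fun D => b ∈ D), ∑ D' ∈ C,
          (if b ∈ symmDiff D D' then (1:ℕ) else 0))
        = (C.filter (fun D => b ∈ D)).card * (C.filter (fun D => ¬ b ∈ D)).card := by
      have hin : ∀ D ∈ C.filter (fun D => b ∈ D),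
          (∑ D' ∈ C, (if b ∈ symmDiff D D' then (1:ℕ) else 0))
            = (C.filter (fun D => ¬ b ∈ D)).card := by
        intro D hD
        have hbD : b ∈ D := (Finset.mem_filter.mp hD).2
        rw [← count_ite b (fun D' => ¬ b ∈ D') inferInstance]
        apply Finset.sum_congr rfl
        intro D' _
        by_cases h : b ∈ D'
        · rw [if_neg, if_neg]
          · exact fun hc => hc h
          · simp [Finset.mem_symmDiff, hbD, h]
        · rw [if_pos, if_pos h]
          simp [Finset.mem_symmDiff, hbD, h]
      rw [Finset.sum_congr rfl hin, Finset.sum_const, smul_eq_mul]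
    have part2 : (∑ D ∈ C.filter (fun D => ¬ b ∈ D), ∑ D' ∈ C,
          (if b ∈ symmDiff D D' then (1:ℕ) else 0))
        = (C.filter (fun D => ¬ b ∈ D)).card * (C.filter (fun D => b ∈ D)).card := by
      have hin : ∀ D ∈ C.filter (fun D => ¬ b ∈ D),
          (∑ D' ∈ C, (if b ∈ symmDiff D D' then (1:ℕ) else 0))
            = (C.filter (fun D => b ∈ D)).card := by
        intro D hD
        have hbD : ¬ b ∈ D := (Finset.mem_filter.mp hD).2
        rw [← count_ite b (fun D' => b ∈ D') inferInstance]
        apply Finset.sum_congr rfl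
        intro D' _
        by_cases h : b ∈ D'
        · rw [if_pos, if_pos h]
          simp [Finset.mem_symmDiff, hbD, h]
        · rw [if_neg, if_neg h]
          simp [Finset.mem_symmDiff, hbD, h]
      rw [Finset.sum_congr rfl hin, Finset.sum_const, smul_eq_mul]
    rw [part1, part2]
    ring
  -- step 3 : product bounded by card times min, and conclude
  have step3 : ∀ b ∈ X \ B,
      2 * ((C.filter (fun D => ¬ b ∈ D)).card * (C.filter (fun D => b ∈ D)).card)
        ≤ 2 * (C.card * min (fw P (insert b B) z) (fw P (insert b B) (insert b z))) := by
    intro b hb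
    have hc0 : (C.filter (fun D => ¬ b ∈ D)).card = fw P (insert b B) z := by
      rw [hfib0 b hb]; rfl
    have hc1 : (C.filter (fun D => b ∈ D)).card = fw P (insert b B) (insert b z) := by
      rw [hfib1 b hb]; rfl
    have hsplit : (C.filter (fun D => b ∈ D)).card
        + (C.filter (fun D => ¬ b ∈ D)).card = C.card :=
      Finset.card_filter_add_card_filter_not _
    set c0 := (C.filter (fun D => ¬ b ∈ D)).card with hc0d
    set c1 := (C.filter (fun D => b ∈ D)).card with hc1d
    rw [← hc0, ← hc1]
    have : c0 * c1 ≤ C.card * min c0 c1 := by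
      rcases le_total c0 c1 with h | h
      · rw [min_eq_left h]
        calc c0 * c1 = c1 * c0 := mul_comm _ _
          _ ≤ C.card * c0 := Nat.mul_le_mul_right _ (by omega)
      · rw [min_eq_right h]
        exact Nat.mul_le_mul_right _ (by omega)
    omega
  have main : C.card * (δ' * (C.card - 1))
      ≤ C.card * (2 * ∑ b ∈ X \ B,
          min (fw P (insert b B) z) (fw P (insert b B) (insert b z))) := by
    calc C.card * (δ' * (C.card - 1)) = δ' * (C.card * (C.card - 1)) := by ring
      _ ≤ ∑ D ∈ C, ∑ D' ∈ C, (symmDiff D D').card := step1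
      _ = ∑ b ∈ X \ B, 2 * ((C.filter (fun D => ¬ b ∈ D)).card
            * (C.filter (fun D => b ∈ D)).card) := step2
      _ ≤ ∑ b ∈ X \ B, 2 * (C.card
            * min (fw P (insert b B) z) (fw P (insert b B) (insert b z))) :=
        Finset.sum_le_sum step3
      _ = C.card * (2 * ∑ b ∈ X \ B,
            min (fw P (insert b B) z) (fw P (insert b B) (insert b z))) := by
        rw [Finset.mul_sum, Finset.mul_sum]
        apply Finset.sum_congr rfl
        intro b _
        ring
  have := Nat.le_of_mul_le_mul_left main hwpos
  rw [hw]
  exact this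


/-- pairing step -/
lemma pairing (P : Finset (Finset V)) (B : Finset V) (b : V) (hb : b ∉ B) :
    2 * ∑ z ∈ P.image (fun D => D ∩ B),
        min (fw P (insert b B) z) (fw P (insert b B) (insert b z)) ≤
      ∑ t ∈ P.image (fun D => D ∩ insert b B),
        min (fw P (insert b B) t) (fw P (insert b B) (symmDiff t {b})) := by
  classical
  set B' := insert b B with hB'
  set Z := (P.image (fun D => D ∩ B)).filter
      (fun z => 0 < fw P B' z ∧ 0 < fw P B' (insert b z)) with hZ
  have hzb : ∀ z ∈ P.image (fun D => D ∩ B), b ∉ z := by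
    intro z hz hbz
    rcases Finset.mem_image.mp hz with ⟨D, _, rfl⟩
    exact hb (Finset.mem_inter.mp hbz).2
  have hZb : ∀ z ∈ Z, b ∉ z := fun z hz => hzb z (Finset.filter_subset _ _ hz)
  -- restrict the lhs sum to Z
  have lhs_eq : (∑ z ∈ P.image (fun D => D ∩ B),
        min (fw P B' z) (fw P B' (insert b z)))
      = ∑ z ∈ Z, min (fw P B' z) (fw P B' (insert b z)) := by
    symm
    apply Finset.sum_subset (Finset.filter_subset _ _)
    intro z hzimg hzZ
    have : ¬ (0 < fw P B' z ∧ 0 < fw P B' (insert b z)) := by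
      intro hc
      exact hzZ (Finset.mem_filter.mpr ⟨hzimg, hc⟩)
    omega
  -- the doubled index set
  have hdisj : Disjoint Z (Z.image (fun z => insert b z)) := by
    rw [Finset.disjoint_right]
    intro t ht htZ
    rcases Finset.mem_image.mp ht with ⟨z, hzZ, rfl⟩
    exact hZb _ htZ (Finset.mem_insert_self b z)
  have hinj : ∀ z₁ ∈ Z, ∀ z₂ ∈ Z, insert b z₁ = insert b z₂ → z₁ = z₂ := by
    intro z₁ h₁ z₂ h₂ he
    have e1 : (insert b z₁).erase b = z₁ := Finset.erase_insert (hZb _ h₁)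
    have e2 : (insert b z₂).erase b = z₂ := Finset.erase_insert (hZb _ h₂)
    rw [← e1, ← e2, he]
  have hsubE : Z ∪ Z.image (fun z => insert b z) ⊆ P.image (fun D => D ∩ B') := by
    intro t ht
    rcases Finset.mem_union.mp ht with ht | ht
    · exact (fw_pos_iff P B' t).mp (Finset.mem_filter.mp ht).2.1
    · rcases Finset.mem_image.mp ht with ⟨z, hzZ, rfl⟩
      exact (fw_pos_iff P B' _).mp (Finset.mem_filter.mp hzZ).2.2
  have hsumE : (∑ t ∈ Z ∪ Z.image (fun z => insert b z),
        min (fw P B' t) (fw P B' (symmDiff t {b})))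
      = 2 * ∑ z ∈ Z, min (fw P B' z) (fw P B' (insert b z)) := by
    rw [Finset.sum_union hdisj]
    have e1 : (∑ t ∈ Z, min (fw P B' t) (fw P B' (symmDiff t {b})))
        = ∑ z ∈ Z, min (fw P B' z) (fw P B' (insert b z)) := by
      apply Finset.sum_congr rfl
      intro z hzZ
      rw [symmDiff_singleton_not_mem (hZb _ hzZ)]
    have e2 : (∑ t ∈ Z.image (fun z => insert b z),
          min (fw P B' t) (fw P B' (symmDiff t {b})))
        = ∑ z ∈ Z, min (fw P B' z) (fw P B' (insert b z)) := by
      rw [Finset.sum_image hinj]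
      apply Finset.sum_congr rfl
      intro z hzZ
      rw [symmDiff_singleton_mem (Finset.mem_insert_self b z),
        Finset.erase_insert (hZb _ hzZ), min_comm]
    rw [e1, e2]
    ring
  rw [lhs_eq, ← hsumE]
  exact Finset.sum_le_sum_of_subset hsubE

/-- main abstract packing contradiction -/
lemma packing_contradiction (r ℓ : ℕ) (hr : 1 ≤ r) (hl : 1 ≤ ℓ)
    (X : Finset V) (P : Finset (Finset V))
    (hPX : ∀ D ∈ P, D ⊆ X)
    (hsep : ∀ D ∈ P, ∀ D' ∈ P, D ≠ D' →
      16 * (2 * r + 6) * r ^ 2 * ℓ + 1 ≤ (symmDiff D D').card)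
    (htr : ∀ A : Finset V, A ⊆ X → A.Nonempty →
      (P.image (fun D => D ∩ A)).card ≤ r * A.card)
    (hm : 2 ≤ P.card) (hn : X.card ≤ r * ℓ * P.card)
    (hbig : 16 * (2 * r + 6) * r ^ 2 * ℓ < X.card) : False := by
  classical
  set d₀ := 2 * r + 6 with hd₀
  set K := 16 * d₀ * r ^ 2 * ℓ with hK
  have hsep' : ∀ D ∈ P, ∀ D' ∈ P, D ≠ D' → K + 1 ≤ (symmDiff D D').card := by
    intro D hD D' hD' hne
    have := hsep D hD D' hD' hne
    calc K + 1 = 16 * (2 * r + 6) * r ^ 2 * ℓ + 1 := by rw [hK, hd₀]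
      _ ≤ _ := this
  have hbig' : K < X.card := by
    calc K = 16 * (2 * r + 6) * r ^ 2 * ℓ := by rw [hK, hd₀]
      _ < X.card := hbig
  clear hsep hbig
  set δ' := K + 1 with hδ'
  set n := X.card with hnn
  set m := P.card with hmm
  set q := (4 * d₀ * n) / δ' with hq
  set s := q + 1 with hs
  have hd₀pos : 0 < d₀ := by omega
  have hδ'pos : 0 < δ' := by omega
  have hr2l : 1 ≤ r ^ 2 * ℓ := by
    have h1 : 1 ≤ r ^ 2 := Nat.one_le_pow _ _ hr
    have h2 : 1 * 1 ≤ r ^ 2 * ℓ := Nat.mul_le_mul h1 hl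
    simpa using h2
  have hKd₀ : 16 * d₀ ≤ δ' := by
    have h2 : 16 * d₀ * 1 ≤ 16 * d₀ * (r ^ 2 * ℓ) := Nat.mul_le_mul_left _ hr2l
    have h3 : 16 * d₀ * (r ^ 2 * ℓ) = K := by rw [hK]; ring
    omega
  clear_value d₀ K δ' n m q s
  -- s ≤ n
  have hq4 : q ≤ n / 4 := by
    have h1 : (4 * d₀ * n) / δ' ≤ (4 * d₀ * n) / (16 * d₀) := Nat.div_le_div_left hKd₀ (by omega)
    have h2 : (4 * d₀ * n) / (16 * d₀) = n / 4 := by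
      have e : 4 * d₀ * n = (4 * d₀) * n := by ring
      have e2 : 16 * d₀ = (4 * d₀) * 4 := by ring
      rw [e, e2, Nat.mul_div_mul_left n 4 (by omega)]
    rw [hq]
    exact h1.trans (le_of_eq h2)
  have hnbig : 128 < n := by
    have : 128 ≤ K := by
      have h2 : 16 * d₀ * 1 ≤ 16 * d₀ * (r ^ 2 * ℓ) := Nat.mul_le_mul_left _ hr2l
      have h3 : 16 * d₀ * (r ^ 2 * ℓ) = K := by rw [hK]; ring
      omega
    omega
  have hsn : s ≤ n := by
    have := Nat.div_le_self n 4
    have h4 : n / 4 + 1 ≤ n := by omega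
    omega
  -- trace count
  set T : Finset V → ℕ := fun B => (P.image (fun D => D ∩ B)).card with hT
  set G : Finset V → V → ℕ := fun C b => ∑ t ∈ P.image (fun D => D ∩ C),
      min (fw P C t) (fw P C (symmDiff t {b})) with hG
  -- the VC-dimension bound coming from the trace hypothesis
  have hVC : ∀ (C : Finset V), C ⊆ X → ∀ A : Finset V, A ⊆ C →
      (∀ t ∈ A.powerset, ∃ z ∈ P.image (fun D => D ∩ C), z ∩ A = t) → A.card ≤ d₀ := by
    intro C hCX A hAC hsh
    rcases Finset.eq_empty_or_nonempty A with rfl | hAne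
    · simp [hd₀]
    have hpow : A.powerset ⊆ P.image (fun D => D ∩ A) := by
      intro t ht
      rcases hsh t ht with ⟨z, hz, hzA⟩
      rcases Finset.mem_image.mp hz with ⟨D, hDP, rfl⟩
      apply Finset.mem_image.mpr
      refine ⟨D, hDP, ?_⟩
      rw [← hzA]
      ext a
      simp only [Finset.mem_inter]
      constructor
      · rintro ⟨haD, haA⟩
        exact ⟨⟨haD, hAC haA⟩, haA⟩
      · rintro ⟨⟨haD, _⟩, haA⟩
        exact ⟨haD, haA⟩
    have h2a : 2 ^ A.card ≤ r * A.card := by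
      calc 2 ^ A.card = A.powerset.card := (Finset.card_powerset A).symm
        _ ≤ (P.image (fun D => D ∩ A)).card := Finset.card_le_card hpow
        _ ≤ r * A.card := htr A (hAC.trans hCX) hAne
    have := pow_arith hr h2a
    omega
  -- the W-bound for each (s+1)-subset
  have hGbound : ∀ C : Finset V, C ⊆ X → (∑ b ∈ C, G C b) ≤ 2 * d₀ * m := by
    intro C hCX
    have hFS : ∀ z ∈ P.image (fun D => D ∩ C), z ⊆ C := by
      intro z hz
      rcases Finset.mem_image.mp hz with ⟨D, _, rfl⟩
      exact Finset.inter_subset_right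
    have h0 : ∀ z, z ∉ P.image (fun D => D ∩ C) → fw P C z = 0 := by
      intro z hz
      by_contra hc
      exact hz ((fw_pos_iff P C z).mp (Nat.pos_of_ne_zero hc))
    have hW := W_bound C.card C le_rfl d₀ (P.image (fun D => D ∩ C)) (fw P C)
      hFS h0 (hVC C hCX)
    rw [sum_fw] at hW
    calc (∑ b ∈ C, G C b)
        = ∑ z ∈ P.image (fun D => D ∩ C), ∑ b ∈ C,
            min (fw P C z) (fw P C (symmDiff z {b})) := Finset.sum_comm
      _ ≤ 2 * d₀ * m := by rw [hmm]; exact hW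
  -- the per-B key inequality
  have key1 : ∀ B : Finset V, B ⊆ X →
      δ' * (m - T B) ≤ ∑ b ∈ X \ B, G (insert b B) b := by
    intro B hBX
    have hTm : (∑ z ∈ P.image (fun D => D ∩ B), fw P B z) = m := by
      rw [hmm]; exact sum_fw P B
    have hfw1 : ∀ z ∈ P.image (fun D => D ∩ B), 1 ≤ fw P B z :=
      fun z hz => (fw_pos_iff P B z).mpr hz
    have e1 : m - T B = ∑ z ∈ P.image (fun D => D ∩ B), (fw P B z - 1) := by
      have e2 : (∑ z ∈ P.image (fun D => D ∩ B), (fw P B z - 1)) + T B = m := by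
        rw [hT]
        calc (∑ z ∈ P.image (fun D => D ∩ B), (fw P B z - 1))
              + (P.image (fun D => D ∩ B)).card
            = ∑ z ∈ P.image (fun D => D ∩ B), ((fw P B z - 1) + 1) := by
              rw [Finset.sum_add_distrib, Finset.sum_const, smul_eq_mul, mul_one]
          _ = ∑ z ∈ P.image (fun D => D ∩ B), fw P B z := by
              apply Finset.sum_congr rfl
              intro z hz
              have := hfw1 z hz
              omega
          _ = m := hTm
      omega
    calc δ' * (m - T B) = ∑ z ∈ P.image (fun D => D ∩ B), δ' * (fw P B z - 1) := by
          rw [e1, Finset.mul_sum]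
      _ ≤ ∑ z ∈ P.image (fun D => D ∩ B), 2 * ∑ b ∈ X \ B,
            min (fw P (insert b B) z) (fw P (insert b B) (insert b z)) := by
          apply Finset.sum_le_sum
          intro z hz
          exact class_bound P X B δ' hPX hsep' hBX z hz
      _ = ∑ b ∈ X \ B, 2 * ∑ z ∈ P.image (fun D => D ∩ B),
            min (fw P (insert b B) z) (fw P (insert b B) (insert b z)) := by
          rw [← Finset.mul_sum, ← Finset.mul_sum, Finset.sum_comm]
      _ ≤ ∑ b ∈ X \ B, G (insert b B) b := by
          apply Finset.sum_le_sum
          intro b hb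
          have hbB : b ∉ B := (Finset.mem_sdiff.mp hb).2
          exact pairing P B b hbB
  clear_value T G
  -- swap the (B, b) double sum
  have hswap : (∑ B ∈ Finset.powersetCard s X, ∑ b ∈ X \ B, G (insert b B) b)
      = ∑ C ∈ Finset.powersetCard (s+1) X, ∑ b ∈ C, G C b := by
    rw [Finset.sum_sigma' (Finset.powersetCard s X) (fun B => X \ B)
        (fun B b => G (insert b B) b),
      Finset.sum_sigma' (Finset.powersetCard (s+1) X) (fun C => C) (fun C b => G C b)]
    apply Finset.sum_nbij' (i := fun p => (⟨insert p.2 p.1, p.2⟩ : Σ _ : Finset V, V))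
      (j := fun p => (⟨p.1.erase p.2, p.2⟩ : Σ _ : Finset V, V))
    · rintro ⟨B, b⟩ hp
      rcases Finset.mem_sigma.mp hp with ⟨hB, hb⟩
      rcases Finset.mem_powersetCard.mp hB with ⟨hBX, hBcard⟩
      rcases Finset.mem_sdiff.mp hb with ⟨hbX, hbB⟩
      apply Finset.mem_sigma.mpr
      constructor
      · apply Finset.mem_powersetCard.mpr
        refine ⟨?_, ?_⟩
        · intro a ha
          rcases Finset.mem_insert.mp ha with rfl | ha
          · exact hbX
          · exact hBX ha
        · rw [Finset.card_insert_of_notMem hbB, hBcard]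
      · exact Finset.mem_insert_self _ _
    · rintro ⟨C, b⟩ hp
      rcases Finset.mem_sigma.mp hp with ⟨hC, hb⟩
      rcases Finset.mem_powersetCard.mp hC with ⟨hCX, hCcard⟩
      apply Finset.mem_sigma.mpr
      constructor
      · apply Finset.mem_powersetCard.mpr
        refine ⟨(Finset.erase_subset _ _).trans hCX, ?_⟩
        rw [Finset.card_erase_of_mem hb, hCcard]
        omega
      · exact Finset.mem_sdiff.mpr ⟨hCX hb, Finset.notMem_erase _ _⟩
    · rintro ⟨B, b⟩ hp
      rcases Finset.mem_sigma.mp hp with ⟨hB, hb⟩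
      rcases Finset.mem_sdiff.mp hb with ⟨hbX, hbB⟩
      have : (insert b B).erase b = B := Finset.erase_insert hbB
      simp only [this]
    · rintro ⟨C, b⟩ hp
      rcases Finset.mem_sigma.mp hp with ⟨hC, hb⟩
      have : insert b (C.erase b) = C := Finset.insert_erase hb
      simp only [this]
    · rintro ⟨B, b⟩ _
      rfl
  -- total bound on the big sum
  have htotal : (∑ B ∈ Finset.powersetCard s X, δ' * (m - T B))
      ≤ (n.choose (s+1)) * (2 * d₀ * m) := by
    calc (∑ B ∈ Finset.powersetCard s X, δ' * (m - T B))
        ≤ ∑ B ∈ Finset.powersetCard s X, ∑ b ∈ X \ B, G (insert b B) b := by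
          apply Finset.sum_le_sum
          intro B hB
          exact key1 B (Finset.mem_powersetCard.mp hB).1
      _ = ∑ C ∈ Finset.powersetCard (s+1) X, ∑ b ∈ C, G C b := hswap
      _ ≤ ∑ _C ∈ Finset.powersetCard (s+1) X, 2 * d₀ * m := by
          apply Finset.sum_le_sum
          intro C hC
          exact hGbound C (Finset.mem_powersetCard.mp hC).1
      _ = (n.choose (s+1)) * (2 * d₀ * m) := by
          rw [Finset.sum_const, smul_eq_mul, Finset.card_powersetCard, ← hnn]
  -- pigeonhole : some B₀ achieves at most the average
  have hpcne : (Finset.powersetCard s X).Nonempty := by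
    rw [Finset.powersetCard_nonempty]
    exact hnn ▸ hsn
  have hpig : ∃ B₀ ∈ Finset.powersetCard s X,
      (n.choose s) * (δ' * (m - T B₀)) ≤ (n.choose (s+1)) * (2 * d₀ * m) := by
    by_contra hc
    push_neg at hc
    have hlt : ∀ B ∈ Finset.powersetCard s X,
        (n.choose (s+1)) * (2 * d₀ * m) < (n.choose s) * (δ' * (m - T B)) := hc
    have hsum : (∑ _B ∈ Finset.powersetCard s X, (n.choose (s+1)) * (2 * d₀ * m))
        < ∑ B ∈ Finset.powersetCard s X, (n.choose s) * (δ' * (m - T B)) :=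
      Finset.sum_lt_sum_of_nonempty hpcne hlt
    rw [Finset.sum_const, smul_eq_mul, Finset.card_powersetCard, ← hnn] at hsum
    rw [← Finset.mul_sum] at hsum
    have h2 : (n.choose s) * (∑ B ∈ Finset.powersetCard s X, δ' * (m - T B))
        ≤ (n.choose s) * ((n.choose (s+1)) * (2 * d₀ * m)) :=
      Nat.mul_le_mul_left _ htotal
    exact absurd hsum (not_lt.mpr h2)
  obtain ⟨B₀, hB₀mem, hB₀⟩ := hpig
  rcases Finset.mem_powersetCard.mp hB₀mem with ⟨hB₀X, hB₀card⟩
  -- use the binomial identity to cancel the choose factors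
  have hchoose : (n.choose (s+1)) * (s+1) = (n.choose s) * (n - s) :=
    Nat.choose_succ_right_eq n s
  have hchpos : 0 < n.choose s := Nat.choose_pos hsn
  have hkey2 : δ' * (m - T B₀) * (s+1) ≤ 2 * d₀ * m * (n - s) := by
    have h1 : (n.choose s) * (δ' * (m - T B₀)) * (s+1)
        ≤ (n.choose (s+1)) * (2 * d₀ * m) * (s+1) := Nat.mul_le_mul_right _ hB₀
    have h2 : (n.choose (s+1)) * (2 * d₀ * m) * (s+1)
        = (n.choose s) * (2 * d₀ * m * (n - s)) := by
      calc (n.choose (s+1)) * (2 * d₀ * m) * (s+1)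
          = ((n.choose (s+1)) * (s+1)) * (2 * d₀ * m) := by ring
        _ = ((n.choose s) * (n - s)) * (2 * d₀ * m) := by rw [hchoose]
        _ = (n.choose s) * (2 * d₀ * m * (n - s)) := by ring
    have h3 : (n.choose s) * (δ' * (m - T B₀) * (s+1))
        ≤ (n.choose s) * (2 * d₀ * m * (n - s)) := by
      calc (n.choose s) * (δ' * (m - T B₀) * (s+1))
          = (n.choose s) * (δ' * (m - T B₀)) * (s+1) := by ring
        _ ≤ _ := h1.trans h2.le
    exact Nat.le_of_mul_le_mul_left h3 hchpos
  -- δ' * (s+1) exceeds 4 d₀ n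
  have hds : 4 * d₀ * n < δ' * (s + 1) := by
    have h1 : δ' * q + (4 * d₀ * n) % δ' = 4 * d₀ * n := by
      rw [hq]
      exact Nat.div_add_mod _ _
    have h2 : (4 * d₀ * n) % δ' < δ' := Nat.mod_lt _ hδ'pos
    have h3 : δ' * (s + 1) = δ' * q + δ' + δ' := by rw [hs]; ring
    omega
  -- deduce m ≤ 2 * T B₀
  have hTle : T B₀ ≤ m := by
    rw [hT, hmm]
    exact Finset.card_image_le
  have hnpos : 0 < n := by omega
  have hm2T : m ≤ 2 * T B₀ := by
    rcases Nat.eq_zero_or_pos (m - T B₀) with hz | hpos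
    · omega
    · have h1 : (m - T B₀) * (4 * d₀ * n) < (m - T B₀) * (δ' * (s+1)) :=
        mul_lt_mul_of_pos_left hds hpos
      have h2 : (m - T B₀) * (δ' * (s+1)) = δ' * (m - T B₀) * (s+1) := by ring
      have h3 : 2 * d₀ * m * (n - s) ≤ 2 * d₀ * m * n := Nat.mul_le_mul_left _ (by omega)
      have h4 : (m - T B₀) * (4 * d₀ * n) < 2 * d₀ * m * n := by
        calc (m - T B₀) * (4 * d₀ * n) < (m - T B₀) * (δ' * (s+1)) := h1
          _ = δ' * (m - T B₀) * (s+1) := h2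
          _ ≤ 2 * d₀ * m * (n - s) := hkey2
          _ ≤ 2 * d₀ * m * n := h3
      have h5 : (2 * d₀ * n) * (2 * (m - T B₀)) < (2 * d₀ * n) * m := by
        calc (2 * d₀ * n) * (2 * (m - T B₀)) = (m - T B₀) * (4 * d₀ * n) := by ring
          _ < 2 * d₀ * m * n := h4
          _ = (2 * d₀ * n) * m := by ring
      have h6 : 2 * (m - T B₀) < m := Nat.lt_of_mul_lt_mul_left h5
      omega
  -- the trace bound at B₀
  have hTrs : T B₀ ≤ r * s := by
    have hB₀ne : B₀.Nonempty := by
      rw [← Finset.card_pos, hB₀card]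
      omega
    have hTval : T B₀ = (P.image (fun D => D ∩ B₀)).card := by rw [hT]
    calc T B₀ = (P.image (fun D => D ∩ B₀)).card := hTval
      _ ≤ r * B₀.card := htr B₀ hB₀X hB₀ne
      _ = r * s := by rw [hB₀card]
  -- final arithmetic : m ≤ 4r, contradiction with n > K
  have hm4r : m ≤ 4 * r := by
    have h1 : m ≤ 2 * (r * s) := by
      calc m ≤ 2 * T B₀ := hm2T
        _ ≤ 2 * (r * s) := Nat.mul_le_mul_left _ hTrs
    have h2 : δ' * q ≤ 4 * d₀ * n := by
      rw [hq, mul_comm]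
      exact Nat.div_mul_le_self _ _
    have h3 : δ' * m ≤ 2 * r * (δ' * q + δ') := by
      calc δ' * m ≤ δ' * (2 * (r * s)) := Nat.mul_le_mul_left _ h1
        _ = 2 * r * (δ' * q + δ') := by rw [hs]; ring
    have h4 : δ' * m ≤ 8 * r * d₀ * n + 2 * r * δ' := by
      calc δ' * m ≤ 2 * r * (δ' * q + δ') := h3
        _ ≤ 2 * r * (4 * d₀ * n + δ') := by
            apply Nat.mul_le_mul_left
            omega
        _ = 8 * r * d₀ * n + 2 * r * δ' := by ring
    have h5 : 16 * r * d₀ * n ≤ K * m := by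
      calc 16 * r * d₀ * n ≤ 16 * r * d₀ * (r * ℓ * m) := by
            apply Nat.mul_le_mul_left
            exact hn
        _ = (16 * d₀ * r ^ 2 * ℓ) * m := by ring
        _ = K * m := by rw [hK]
    have h6 : K * m ≤ δ' * m := Nat.mul_le_mul_right _ (by omega)
    have h7 : 2 * (δ' * m) ≤ δ' * m + 4 * r * δ' := by
      have := Nat.mul_le_mul_left 2 h4
      have e : 2 * (8 * r * d₀ * n + 2 * r * δ') = 16 * r * d₀ * n + 4 * r * δ' := by ring
      omega
    have h8 : δ' * m ≤ δ' * (4 * r) := by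
      have : δ' * m ≤ 4 * r * δ' := by omega
      calc δ' * m ≤ 4 * r * δ' := this
        _ = δ' * (4 * r) := by ring
    exact Nat.le_of_mul_le_mul_left (by
      calc δ' * m ≤ δ' * (4 * r) := h8) hδ'pos
  -- contradiction
  have hfin : n ≤ 4 * r ^ 2 * ℓ := by
    calc n ≤ r * ℓ * m := hn
      _ ≤ r * ℓ * (4 * r) := Nat.mul_le_mul_left _ hm4r
      _ = 4 * r ^ 2 * ℓ := by ring
  have hfin2 : 4 * r ^ 2 * ℓ ≤ K := by
    rw [hK]
    have h1 : 4 * (r ^ 2 * ℓ) ≤ (16 * d₀) * (r ^ 2 * ℓ) := by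
      apply Nat.mul_le_mul_right
      omega
    calc 4 * r ^ 2 * ℓ = 4 * (r ^ 2 * ℓ) := by ring
      _ ≤ (16 * d₀) * (r ^ 2 * ℓ) := h1
      _ = 16 * d₀ * r ^ 2 * ℓ := by ring
  omega

end Packing

/-- `G` has neighborhood complexity at most `r * m`. -/
def NbhdComplexityLinear {V : Type} [Fintype V] [DecidableEq V]
    (G : SimpleGraph V) [DecidableRel G.Adj] (r : ℕ) : Prop :=
  ∀ A : Finset V, A.Nonempty →
    (Finset.univ.image (fun v => G.neighborFinset v ∩ A)).card ≤ r * A.card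

/-- In a bipartite graph of linear neighborhood complexity with no twins in `X`, every
sufficiently large subset `Y'` of `Y` contains a pair of `δ`-near-twins. -/
theorem near_twins_of_linear_neighborhood_complexity :
    ∀ r ℓ : ℕ, 0 < r → 0 < ℓ → ∃ δ : ℕ, 0 < δ ∧
      ∀ (V : Type) [Fintype V] [DecidableEq V] (G : SimpleGraph V) [DecidableRel G.Adj]
        (X Y : Finset V), Disjoint X Y → X ∪ Y = Finset.univ →
        (∀ u v : V, G.Adj u v → (u ∈ X ∧ v ∈ Y) ∨ (u ∈ Y ∧ v ∈ X)) →
        (∀ u ∈ X, ∀ v ∈ X, u ≠ v → G.neighborFinset u ≠ G.neighborFinset v) →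
        NbhdComplexityLinear G r →
        ∀ Y' ⊆ Y, 2 ≤ Y'.card → Y.card ≤ ℓ * Y'.card →
          ∃ u ∈ Y', ∃ v ∈ Y', u ≠ v ∧
            (symmDiff (G.neighborFinset u) (G.neighborFinset v)).card ≤ δ := by
  intro r ℓ hr hl
  refine ⟨16 * (2 * r + 6) * r ^ 2 * ℓ, ?_, ?_⟩
  · have h1 : 0 < r ^ 2 := pow_pos hr 2
    have h2 : 0 < 16 * (2 * r + 6) := by omega
    exact Nat.mul_pos (Nat.mul_pos h2 h1) hl
  intro V _ _ G _ X Y hdisj huniv hadj htwin hcompl Y' hY'Y hY'2 hYl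
  by_contra hcon
  push_neg at hcon
  set δ := 16 * (2 * r + 6) * r ^ 2 * ℓ with hδ
  -- neighborhoods of Y-vertices lie in X, and vice versa
  have hNY : ∀ y ∈ Y, G.neighborFinset y ⊆ X := by
    intro y hy v hv
    have hadj' : G.Adj y v := (SimpleGraph.mem_neighborFinset G y v).mp hv
    rcases hadj y v hadj' with ⟨hyX, _⟩ | ⟨_, hvX⟩
    · exact absurd hy (Finset.disjoint_left.mp hdisj hyX)
    · exact hvX
  have hNX : ∀ x ∈ X, G.neighborFinset x ⊆ Y := by
    intro x hx v hv
    have hadj' : G.Adj x v := (SimpleGraph.mem_neighborFinset G x v).mp hv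
    rcases hadj x v hadj' with ⟨_, hvY⟩ | ⟨hxY, _⟩
    · exact hvY
    · exact absurd hxY (Finset.disjoint_left.mp hdisj hx)
  have hY'ne : Y'.Nonempty := Finset.card_pos.mp (by omega)
  have hYne : Y.Nonempty := ⟨hY'ne.choose, hY'Y hY'ne.choose_spec⟩
  -- |X| ≤ r |Y|
  have hXrY : X.card ≤ r * Y.card := by
    have hinj : ∀ u ∈ X, ∀ v ∈ X,
        G.neighborFinset u ∩ Y = G.neighborFinset v ∩ Y → u = v := by
      intro u hu v hv he
      by_contra hne
      apply htwin u hu v hv hne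
      have e1 : G.neighborFinset u ∩ Y = G.neighborFinset u :=
        Finset.inter_eq_left.mpr (hNX u hu)
      have e2 : G.neighborFinset v ∩ Y = G.neighborFinset v :=
        Finset.inter_eq_left.mpr (hNX v hv)
      rw [← e1, ← e2, he]
    calc X.card = (X.image (fun x => G.neighborFinset x ∩ Y)).card :=
          (Finset.card_image_of_injOn hinj).symm
      _ ≤ (Finset.univ.image (fun v => G.neighborFinset v ∩ Y)).card :=
          Finset.card_le_card (Finset.image_subset_image (Finset.subset_univ X))
      _ ≤ r * Y.card := hcompl Y hYne
  -- the family of neighborhoods of Y'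
  set P : Finset (Finset V) := Y'.image (fun y => G.neighborFinset y) with hP
  have hNinj : ∀ u ∈ Y', ∀ v ∈ Y',
      G.neighborFinset u = G.neighborFinset v → u = v := by
    intro u hu v hv he
    by_contra hne
    have := hcon u hu v hv hne
    rw [he, symmDiff_self] at this
    simp at this
  have hPcard : P.card = Y'.card := Finset.card_image_of_injOn hNinj
  have hPX : ∀ D ∈ P, D ⊆ X := by
    intro D hD
    rcases Finset.mem_image.mp hD with ⟨y, hy, rfl⟩
    exact hNY y (hY'Y hy)
  have hsepP : ∀ D ∈ P, ∀ D' ∈ P, D ≠ D' → δ + 1 ≤ (symmDiff D D').card := by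
    intro D hD D' hD' hne
    rcases Finset.mem_image.mp hD with ⟨y, hy, rfl⟩
    rcases Finset.mem_image.mp hD' with ⟨y', hy', rfl⟩
    have hyy : y ≠ y' := by
      rintro rfl
      exact hne rfl
    have := hcon y hy y' hy' hyy
    omega
  have htrP : ∀ A : Finset V, A ⊆ X → A.Nonempty →
      (P.image (fun D => D ∩ A)).card ≤ r * A.card := by
    intro A _ hAne
    have hsub : P.image (fun D => D ∩ A)
        ⊆ Finset.univ.image (fun v => G.neighborFinset v ∩ A) := by
      intro t ht
      rcases Finset.mem_image.mp ht with ⟨D, hD, rfl⟩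
      rcases Finset.mem_image.mp hD with ⟨y, _, rfl⟩
      exact Finset.mem_image.mpr ⟨y, Finset.mem_univ y, rfl⟩
    exact (Finset.card_le_card hsub).trans (hcompl A hAne)
  have hmP : 2 ≤ P.card := by omega
  have hnP : X.card ≤ r * ℓ * P.card := by
    calc X.card ≤ r * Y.card := hXrY
      _ ≤ r * (ℓ * Y'.card) := Nat.mul_le_mul_left _ hYl
      _ = r * ℓ * Y'.card := by ring
      _ = r * ℓ * P.card := by rw [hPcard]
  by_cases hXδ : X.card ≤ δ
  · obtain ⟨u, hu, v, hv, hne⟩ := Finset.one_lt_card.mp hY'2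
    apply absurd (hcon u hu v hv hne)
    push_neg
    have hsub : symmDiff (G.neighborFinset u) (G.neighborFinset v) ⊆ X := by
      intro a ha
      rcases Finset.mem_symmDiff.mp ha with ⟨h1, _⟩ | ⟨h1, _⟩
      · exact hNY u (hY'Y hu) h1
      · exact hNY v (hY'Y hv) h1
    exact (Finset.card_le_card hsub).trans hXδ
  · exact packing_contradiction r ℓ hr hl X P hPX hsepP htrP hmP hnP (by omega)
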